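/- Let X, Y be Hilbert spaces, A ∈ B(X,Y), and T, T' ⊆ X, S, S' ⊆ Y closed subspaces such that G = A_{T,S}^{(2)} exists and max{δ̂(T,T'), δ̂(S,S')} < 1/(1 + ‖A‖·‖G‖)². Then A_{T',S'}^{(2)} exists and ‖A_{T',S'}^{(2)}‖ ≤ ‖G‖ / (1 − ‖G‖·‖A‖·(δ̂(T,T') + δ̂(S,S'))). -/

import Mathlib

noncomputable section

open ContinuousLinearMap

/-- δ(M,N) = sup{dist(x,N) : x ∈ M, ‖x‖ = 1}, with sSup ∅ = 0 covering M = {0}. -/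
def gapDelta {H : Type*} [NormedAddCommGroup H] (M N : Set H) : ℝ :=
  sSup ((fun x => Metric.infDist x N) '' {x | x ∈ M ∧ ‖x‖ = 1})

/-- The gap δ̂(M,N) = max{δ(M,N), δ(N,M)}. -/
def gapHat {H : Type*} [NormedAddCommGroup H] (M N : Set H) : ℝ :=
  max (gapDelta M N) (gapDelta N M)

/-- Orthogonal projection onto a closed subspace, as an operator H →L[ℂ] H. -/
def projCLM {H : Type*} [NormedAddCommGroup H] [InnerProductSpace ℂ H] [CompleteSpace H]
    (K : Submodule ℂ H) (hK : IsClosed (K : Set H)) : H →L[ℂ] H :=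
  haveI := hK.completeSpace_coe
  K.subtypeL.comp K.orthogonalProjectionOnto

/-- G is the outer inverse A_{T,S}^{(2)}: GAG = G, R(G) = T, N(G) = S. -/
def IsOuterInv {X Y : Type*} [NormedAddCommGroup X] [NormedSpace ℂ X]
    [NormedAddCommGroup Y] [NormedSpace ℂ Y]
    (A : X →L[ℂ] Y) (T : Submodule ℂ X) (S : Submodule ℂ Y) (G : Y →L[ℂ] X) : Prop :=
  G ∘L (A ∘L G) = G ∧ LinearMap.range (G : Y →ₗ[ℂ] X) = T ∧ LinearMap.ker (G : Y →ₗ[ℂ] X) = S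

/-- B is the Moore–Penrose inverse of A. -/
def IsMPInv {X Y : Type*} [NormedAddCommGroup X] [InnerProductSpace ℂ X] [CompleteSpace X]
    [NormedAddCommGroup Y] [InnerProductSpace ℂ Y] [CompleteSpace Y]
    (A : X →L[ℂ] Y) (B : Y →L[ℂ] X) : Prop :=
  A ∘L (B ∘L A) = A ∧ B ∘L (A ∘L B) = B ∧
  adjoint (A ∘L B) = A ∘L B ∧ adjoint (B ∘L A) = B ∘L A

section Helpers

variable {H : Type*} [NormedAddCommGroup H] [InnerProductSpace ℂ H] [CompleteSpace H]
  {K M N : Submodule ℂ H} (hK : IsClosed (K : Set H))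

lemma projCLM_mem (x : H) : projCLM K hK x ∈ K := by
  haveI := hK.completeSpace_coe
  exact (K.orthogonalProjectionOnto x).2

lemma projCLM_eq_self {x : H} (hx : x ∈ K) : projCLM K hK x = x := by
  haveI := hK.completeSpace_coe
  exact (Submodule.starProjection_eq_self_iff (K := K)).2 hx

lemma projCLM_norm_le (x : H) : ‖projCLM K hK x‖ ≤ ‖x‖ := by
  haveI := hK.completeSpace_coe
  calc ‖projCLM K hK x‖ = ‖(K.orthogonalProjectionOnto x : H)‖ := rfl
    _ = ‖K.orthogonalProjectionOnto x‖ := rfl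
    _ ≤ 1 * ‖x‖ := (K.orthogonalProjectionOnto).le_of_opNorm_le (Submodule.orthogonalProjectionOnto_norm_le _) x
    _ = ‖x‖ := one_mul _

lemma projCLM_sub_norm_le (x : H) : ‖x - projCLM K hK x‖ ≤ ‖x‖ := by
  haveI := hK.completeSpace_coe
  have h := Submodule.starProjection_orthogonal_val (K := K) x
  calc ‖x - projCLM K hK x‖ = ‖(Kᗮ.orthogonalProjectionOnto x : H)‖ := by rw [← Submodule.starProjection_apply, h]; rfl
    _ ≤ 1 * ‖x‖ := (Kᗮ.orthogonalProjectionOnto).le_of_opNorm_le (Submodule.orthogonalProjectionOnto_norm_le _) x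
    _ = ‖x‖ := one_mul _

lemma projCLM_norm_op : ‖projCLM K hK‖ ≤ 1 :=
  opNorm_le_bound _ zero_le_one (fun x => by rw [one_mul]; exact projCLM_norm_le hK x)

lemma one_sub_projCLM_norm_op : ‖(1 : H →L[ℂ] H) - projCLM K hK‖ ≤ 1 :=
  opNorm_le_bound _ zero_le_one (fun x => by rw [one_mul]; exact projCLM_sub_norm_le hK x)

lemma projCLM_selfAdjoint : IsSelfAdjoint (projCLM K hK) := by
  haveI := hK.completeSpace_coe
  exact isSelfAdjoint_starProjection K

lemma gapDelta_nonneg (M N : Set H) : 0 ≤ gapDelta M N :=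
  Real.sSup_nonneg (by rintro x ⟨y, -, rfl⟩; exact Metric.infDist_nonneg)

lemma gapHat_nonneg (M N : Set H) : 0 ≤ gapHat M N :=
  le_max_of_le_left (gapDelta_nonneg M N)

lemma norm_sub_projCLM_le_infDist (hN : IsClosed (N : Set H)) (x : H) :
    ‖x - projCLM N hN x‖ ≤ Metric.infDist x (N : Set H) := by
  haveI := hN.completeSpace_coe
  rw [Metric.infDist_eq_iInf]
  haveI : Nonempty (N : Set H) := ⟨⟨0, N.zero_mem⟩⟩
  apply le_ciInf
  intro y
  rw [dist_eq_norm]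
  have h : ‖x - projCLM N hN x‖ = ⨅ w : N, ‖x - w‖ := Submodule.starProjection_minimal (U := N) x
  rw [h]
  exact ciInf_le ⟨0, by rintro r ⟨w, rfl⟩; positivity⟩ (⟨(y : H), y.2⟩ : N)

lemma norm_sub_projCLM_le (hM : IsClosed (M : Set H)) (hN : IsClosed (N : Set H))
    {m : H} (hm : m ∈ M) :
    ‖m - projCLM N hN m‖ ≤ gapDelta (M : Set H) (N : Set H) * ‖m‖ := by
  rcases eq_or_ne m 0 with rfl | hm0
  · simp
  · set u : H := ‖m‖⁻¹ • m with hu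
    have hnm : (0:ℝ) < ‖m‖ := norm_pos_iff.2 hm0
    have huM : u ∈ M := M.smul_of_tower_mem _ hm
    have hun : ‖u‖ = 1 := by
      rw [hu, norm_smul, norm_inv, norm_norm, inv_mul_cancel₀ hnm.ne']
    have h1 : Metric.infDist u (N : Set H) ≤ gapDelta (M : Set H) (N : Set H) := by
      apply le_csSup
      · refine ⟨1, ?_⟩
        rintro r ⟨x, ⟨-, hx1⟩, rfl⟩
        calc Metric.infDist x (N : Set H) ≤ dist x 0 := Metric.infDist_le_dist_of_mem N.zero_mem
          _ = ‖x‖ := by simp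
          _ = 1 := hx1
      · exact ⟨u, ⟨huM, hun⟩, rfl⟩
    have h2 := (norm_sub_projCLM_le_infDist hN u).trans h1
    have h3 : u - projCLM N hN u = ‖m‖⁻¹ • (m - projCLM N hN m) := by
      rw [hu, smul_sub, map_smul_of_tower]
    rw [h3, norm_smul, norm_inv, norm_norm] at h2
    calc ‖m - projCLM N hN m‖ = ‖m‖ * (‖m‖⁻¹ * ‖m - projCLM N hN m‖) := by
          field_simp
      _ ≤ ‖m‖ * gapDelta (M : Set H) (N : Set H) := by
          exact mul_le_mul_of_nonneg_left h2 hnm.le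
      _ = _ := mul_comm _ _

lemma one_sub_proj_comp_proj_norm_le (hM : IsClosed (M : Set H)) (hN : IsClosed (N : Set H)) :
    ‖((1 : H →L[ℂ] H) - projCLM M hM) ∘L projCLM N hN‖ ≤ gapDelta (N : Set H) (M : Set H) := by
  apply opNorm_le_bound _ (gapDelta_nonneg _ _)
  intro x
  have h1 : ‖projCLM N hN x - projCLM M hM (projCLM N hN x)‖ ≤
      gapDelta (N : Set H) (M : Set H) * ‖projCLM N hN x‖ :=
    norm_sub_projCLM_le hN hM (projCLM_mem hN x)
  calc ‖(((1 : H →L[ℂ] H) - projCLM M hM) ∘L projCLM N hN) x‖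
      = ‖projCLM N hN x - projCLM M hM (projCLM N hN x)‖ := by simp [comp_apply, sub_apply]
    _ ≤ gapDelta (N : Set H) (M : Set H) * ‖projCLM N hN x‖ := h1
    _ ≤ gapDelta (N : Set H) (M : Set H) * ‖x‖ :=
        mul_le_mul_of_nonneg_left (projCLM_norm_le hN x) (gapDelta_nonneg _ _)

lemma proj_comp_one_sub_proj_norm_le (hM : IsClosed (M : Set H)) (hN : IsClosed (N : Set H)) :
    ‖projCLM N hN ∘L ((1 : H →L[ℂ] H) - projCLM M hM)‖ ≤ gapDelta (N : Set H) (M : Set H) := by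
  have hadj : adjoint (((1 : H →L[ℂ] H) - projCLM M hM) ∘L projCLM N hN) =
      projCLM N hN ∘L ((1 : H →L[ℂ] H) - projCLM M hM) := by
    rw [adjoint_comp]
    rw [(projCLM_selfAdjoint hN).adjoint_eq]
    congr 1
    rw [map_sub]
    rw [(projCLM_selfAdjoint hM).adjoint_eq]
    rw [one_def, adjoint_id]
  rw [← hadj, adjoint.norm_map]
  exact one_sub_proj_comp_proj_norm_le hM hN

lemma projCLM_sub_mem_orthogonal (hN : IsClosed (N : Set H)) (x : H) :
    x - projCLM N hN x ∈ Nᗮ := by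
  haveI := hN.completeSpace_coe
  exact Submodule.sub_starProjection_mem_orthogonal x

lemma proj_sub_proj_norm_le (hM : IsClosed (M : Set H)) (hN : IsClosed (N : Set H)) :
    ‖projCLM M hM - projCLM N hN‖ ≤ gapHat (M : Set H) (N : Set H) := by
  set d := gapHat (M : Set H) (N : Set H) with hd
  have hd0 : 0 ≤ d := gapHat_nonneg _ _
  apply opNorm_le_bound _ hd0
  intro x
  set a : H := projCLM M hM x - projCLM N hN (projCLM M hM x) with ha
  set w : H := x - projCLM M hM x with hw
  set b : H := projCLM N hN w with hb
  have hab : (projCLM M hM - projCLM N hN) x = a - b := by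
    simp only [sub_apply, ha, hb, hw, map_sub]
    abel
  have haN : a ∈ Nᗮ := projCLM_sub_mem_orthogonal hN _
  have hbN : b ∈ N := projCLM_mem hN _
  have hinner : (inner ℂ a b : ℂ) = 0 :=
    Submodule.inner_left_of_mem_orthogonal hbN haN
  have hpyth : ‖a - b‖ * ‖a - b‖ = ‖a‖ * ‖a‖ + ‖b‖ * ‖b‖ := by
    have h0 : (inner ℂ a (-b) : ℂ) = 0 := by rw [inner_neg_right, hinner, neg_zero]
    have := norm_add_sq_eq_norm_sq_add_norm_sq_of_inner_eq_zero a (-b) h0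
    simpa [sub_eq_add_neg] using this
  -- bounds on a and b
  have hA : ‖a‖ ≤ d * ‖projCLM M hM x‖ := by
    refine (norm_sub_projCLM_le hM hN (projCLM_mem hM x)).trans ?_
    exact mul_le_mul_of_nonneg_right (le_max_left _ _) (norm_nonneg _)
  have hwid : projCLM M hM w = 0 := by
    simp [hw, map_sub, projCLM_eq_self hM (projCLM_mem hM x)]
  have hB : ‖b‖ ≤ d * ‖w‖ := by
    have h1 : b = (projCLM N hN ∘L ((1 : H →L[ℂ] H) - projCLM M hM)) w := by
      simp [comp_apply, sub_apply, hwid, hb]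
    rw [h1]
    exact le_of_opNorm_le _ ((proj_comp_one_sub_proj_norm_le hM hN).trans (le_max_right _ _)) w
  have hxw : (inner ℂ (projCLM M hM x) w : ℂ) = 0 :=
    Submodule.inner_right_of_mem_orthogonal (projCLM_mem hM x) (projCLM_sub_mem_orthogonal hM x)
  have hx2 : ‖projCLM M hM x‖ * ‖projCLM M hM x‖ + ‖w‖ * ‖w‖ = ‖x‖ * ‖x‖ := by
    have h2 := norm_add_sq_eq_norm_sq_add_norm_sq_of_inner_eq_zero (projCLM M hM x) w hxw
    have h3 : projCLM M hM x + w = x := by rw [hw]; abel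
    rw [h3] at h2
    linarith
  have key : ‖(projCLM M hM - projCLM N hN) x‖ * ‖(projCLM M hM - projCLM N hN) x‖ ≤
      (d * ‖x‖) * (d * ‖x‖) := by
    rw [hab, hpyth]
    have h4 : ‖a‖ * ‖a‖ ≤ (d * ‖projCLM M hM x‖) * (d * ‖projCLM M hM x‖) :=
      mul_le_mul hA hA (norm_nonneg a) (mul_nonneg hd0 (norm_nonneg _))
    have h5 : ‖b‖ * ‖b‖ ≤ (d * ‖w‖) * (d * ‖w‖) :=
      mul_le_mul hB hB (norm_nonneg b) (mul_nonneg hd0 (norm_nonneg _))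
    have h6 : d * d * (‖projCLM M hM x‖ * ‖projCLM M hM x‖ + ‖w‖ * ‖w‖) =
        d * d * (‖x‖ * ‖x‖) := by rw [hx2]
    nlinarith [h4, h5, h6]
  nlinarith [norm_nonneg ((projCLM M hM - projCLM N hN) x), mul_nonneg hd0 (norm_nonneg x)]

lemma projCLM_surjOn (hM : IsClosed (M : Set H)) (hN : IsClosed (N : Set H))
    (h : ‖projCLM M hM - projCLM N hN‖ < 1) :
    ∀ n ∈ N, ∃ m ∈ M, projCLM N hN m = n := by
  haveI := hN.completeSpace_coe
  set p : H →L[ℂ] N := N.orthogonalProjectionOnto with hp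
  set e : N →L[ℂ] N := p ∘L ((projCLM M hM) ∘L N.subtypeL) with he
  have hsub : ‖(1 : N →L[ℂ] N) - e‖ < 1 := by
    refine lt_of_le_of_lt (opNorm_le_bound _ (norm_nonneg _) ?_) h
    intro n
    have h2 : p (n : H) = n := Submodule.orthogonalProjectionOnto_mem_subspace_eq_self n
    have h3 : projCLM N hN (n : H) = (n : H) := projCLM_eq_self hN n.2
    have h1 : ((1 : N →L[ℂ] N) - e) n = p ((projCLM N hN) (n : H) - projCLM M hM (n : H)) := by
      simp only [sub_apply, one_apply_eq_self, he, comp_apply, Submodule.subtypeL_apply, map_sub, h2, h3]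
    rw [h1]
    calc ‖p (projCLM N hN (n : H) - projCLM M hM (n : H))‖
        ≤ 1 * ‖projCLM N hN (n : H) - projCLM M hM (n : H)‖ :=
          p.le_of_opNorm_le (Submodule.orthogonalProjectionOnto_norm_le _) _
      _ = ‖(projCLM N hN - projCLM M hM) (n : H)‖ := by rw [one_mul, sub_apply]
      _ ≤ ‖projCLM N hN - projCLM M hM‖ * ‖(n : H)‖ := le_opNorm _ _
      _ = ‖projCLM M hM - projCLM N hN‖ * ‖n‖ := by rw [norm_sub_rev]; rfl
  intro n hn
  set u : (N →L[ℂ] N)ˣ := Units.oneSub ((1 : N →L[ℂ] N) - e) hsub with hu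
  have huv : u.val = e := by simp [hu]
  set n₀ : N := (↑u⁻¹ : N →L[ℂ] N) ⟨n, hn⟩ with hn₀
  have hen : e n₀ = ⟨n, hn⟩ := by
    have := congrArg (fun (f : N →L[ℂ] N) => f ⟨n, hn⟩) u.mul_inv
    simpa [hn₀, huv, mul_def, comp_apply] using this
  refine ⟨projCLM M hM (n₀ : H), projCLM_mem hM _, ?_⟩
  have : projCLM N hN (projCLM M hM (n₀ : H)) = ((e n₀ : N) : H) := by
    simp [projCLM, he, comp_apply]; rfl
  rw [this, hen]

lemma projCLM_inj (hM : IsClosed (M : Set H)) (hN : IsClosed (N : Set H))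
    (h : ‖projCLM M hM - projCLM N hN‖ < 1) {m : H} (hm : m ∈ M)
    (h0 : projCLM N hN m = 0) : m = 0 := by
  by_contra hne
  have h1 : m - projCLM N hN m = (projCLM M hM - projCLM N hN) m := by
    rw [sub_apply, projCLM_eq_self hM hm]
  have h2 : ‖m‖ ≤ ‖projCLM M hM - projCLM N hN‖ * ‖m‖ := by
    calc ‖m‖ = ‖m - projCLM N hN m‖ := by rw [h0, sub_zero]
      _ = ‖(projCLM M hM - projCLM N hN) m‖ := by rw [h1]
      _ ≤ _ := le_opNorm _ _
  have h3 : (0:ℝ) < ‖m‖ := norm_pos_iff.2 hne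
  nlinarith

end Helpers

variable {X Y : Type*} [NormedAddCommGroup X] [InnerProductSpace ℂ X] [CompleteSpace X]
  [NormedAddCommGroup Y] [InnerProductSpace ℂ Y] [CompleteSpace Y]
set_option maxHeartbeats 1000000 in
theorem stmt_12 (A : X →L[ℂ] Y) (T T' : Submodule ℂ X) (S S' : Submodule ℂ Y)
    (hT : IsClosed (T : Set X)) (hT' : IsClosed (T' : Set X))
    (hS : IsClosed (S : Set Y)) (hS' : IsClosed (S' : Set Y))
    (G : Y →L[ℂ] X) (hG : IsOuterInv A T S G)
    (hgap : max (gapHat (T : Set X) (T' : Set X)) (gapHat (S : Set Y) (S' : Set Y)) <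
      1 / (1 + ‖A‖ * ‖G‖) ^ 2) :
    ∃ G' : Y →L[ℂ] X, IsOuterInv A T' S' G' ∧
      ‖G'‖ ≤ ‖G‖ /
        (1 - ‖G‖ * ‖A‖ * (gapHat (T : Set X) (T' : Set X) + gapHat (S : Set Y) (S' : Set Y))) := by
  obtain ⟨hGAG, hrange, hker⟩ := hG
  set P : X →L[ℂ] X := projCLM T hT with hP
  set P' : X →L[ℂ] X := projCLM T' hT' with hP'
  set Q : Y →L[ℂ] Y := projCLM S hS with hQ
  set Q' : Y →L[ℂ] Y := projCLM S' hS' with hQ'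
  set dT : ℝ := gapHat (T : Set X) (T' : Set X) with hdT
  set dS : ℝ := gapHat (S : Set Y) (S' : Set Y) with hdS
  set c : ℝ := ‖A‖ * ‖G‖ with hc
  have hc0 : (0:ℝ) ≤ c := by positivity
  have hdT0 : (0:ℝ) ≤ dT := gapHat_nonneg _ _
  have hdS0 : (0:ℝ) ≤ dS := gapHat_nonneg _ _
  have hdTlt : dT < 1 / (1 + c) ^ 2 := lt_of_le_of_lt (le_max_left _ _) hgap
  have hdSlt : dS < 1 / (1 + c) ^ 2 := lt_of_le_of_lt (le_max_right _ _) hgap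
  have hq : (0:ℝ) < (1 + c) ^ 2 := by positivity
  have hfrac1 : 1 / (1 + c) ^ 2 ≤ 1 := by
    rw [div_le_one hq]; nlinarith
  have hdT1 : dT < 1 := hdTlt.trans_le hfrac1
  have hdS1 : dS < 1 := hdSlt.trans_le hfrac1
  set k : ℝ := ‖G‖ * ‖A‖ * (dT + dS) with hk
  have hk0 : (0:ℝ) ≤ k := by positivity
  have hk1 : k < 1 := by
    have h1 : k ≤ c * (2 / (1 + c) ^ 2) := by
      have : dT + dS ≤ 2 / (1 + c) ^ 2 := by
        calc dT + dS ≤ 1 / (1 + c) ^ 2 + 1 / (1 + c) ^ 2 := add_le_add hdTlt.le hdSlt.le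
          _ = 2 / (1 + c) ^ 2 := by ring
      calc k = c * (dT + dS) := by rw [hk, hc]; ring
        _ ≤ c * (2 / (1 + c) ^ 2) := mul_le_mul_of_nonneg_left this hc0
    have h2 : c * (2 / (1 + c) ^ 2) ≤ 1 / 2 := by
      rw [mul_div_assoc', div_le_div_iff₀ hq (by norm_num : (0:ℝ) < 2)]
      nlinarith [sq_nonneg (1 - c)]
    linarith
  have hkpos : (0:ℝ) < 1 - k := by linarith
  -- projection norm bounds
  have hPP' : ‖P - P'‖ ≤ dT := proj_sub_proj_norm_le hT hT'
  have hQQ' : ‖Q - Q'‖ ≤ dS := proj_sub_proj_norm_le hS hS'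
  have hPP'1 : ‖P - P'‖ < 1 := hPP'.trans_lt hdT1
  have hQ'Q1 : ‖Q' - Q‖ < 1 := by rw [norm_sub_rev]; exact hQQ'.trans_lt hdS1
  -- units
  set w : (Y →L[ℂ] Y)ˣ := Units.oneSub (Q' - Q) hQ'Q1 with hw
  have hwval : (w : Y →L[ℂ] Y) = 1 - (Q' - Q) := rfl
  set V : X →L[ℂ] X := 1 - (P - P') with hV
  set D : X →L[ℂ] Y := A - ((w : Y →L[ℂ] Y) ∘L (A ∘L V)) with hD
  set t : Y →L[ℂ] Y := D ∘L G with ht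
  -- membership facts
  have hGT : ∀ y, G y ∈ T := fun y => hrange ▸ LinearMap.mem_range_self _ y
  have hPG : ∀ y, P (G y) = G y := fun y => projCLM_eq_self hT (hGT y)
  have hGS : ∀ {y}, y ∈ S → G y = 0 := fun {y} hy => by
    rw [← hker] at hy; exact hy
  -- bound on t
  have htk : ‖t‖ ≤ k := by
    apply opNorm_le_bound _ hk0
    intro y
    have hVG : V (G y) = P' (G y) := by
      rw [hV]; simp only [sub_apply, one_apply_eq_self, hPG y]; abel
    have e1 : t y = A ((P (G y)) - P' (G y)) + (Q' - Q) (A (P' (G y))) := by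
      rw [ht, comp_apply, hD, sub_apply, comp_apply, comp_apply, hVG, hwval]
      simp only [sub_apply, one_apply_eq_self, hPG y, map_sub]
      abel
    have b1 : ‖A ((P (G y)) - P' (G y))‖ ≤ ‖A‖ * (dT * ‖G y‖) := by
      calc ‖A ((P (G y)) - P' (G y))‖ ≤ ‖A‖ * ‖(P - P') (G y)‖ := by
            rw [sub_apply]; exact A.le_opNorm _
        _ ≤ ‖A‖ * (dT * ‖G y‖) := by
            apply mul_le_mul_of_nonneg_left _ (norm_nonneg A)
            exact le_of_opNorm_le _ hPP' _
    have b2 : ‖(Q' - Q) (A (P' (G y)))‖ ≤ dS * (‖A‖ * ‖G y‖) := by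
      calc ‖(Q' - Q) (A (P' (G y)))‖ ≤ ‖Q' - Q‖ * ‖A (P' (G y))‖ := le_opNorm _ _
        _ ≤ dS * (‖A‖ * ‖G y‖) := by
            apply mul_le_mul (by rw [norm_sub_rev]; exact hQQ')
            · calc ‖A (P' (G y))‖ ≤ ‖A‖ * ‖P' (G y)‖ := A.le_opNorm _
                _ ≤ ‖A‖ * ‖G y‖ := mul_le_mul_of_nonneg_left
                    (projCLM_norm_le hT' _) (norm_nonneg A)
            · positivity
            · exact hdS0
    have b3 : ‖G y‖ ≤ ‖G‖ * ‖y‖ := G.le_opNorm y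
    calc ‖t y‖ ≤ ‖A ((P (G y)) - P' (G y))‖ + ‖(Q' - Q) (A (P' (G y)))‖ := by
          rw [e1]; exact norm_add_le _ _
      _ ≤ ‖A‖ * (dT * ‖G y‖) + dS * (‖A‖ * ‖G y‖) := add_le_add b1 b2
      _ = (‖A‖ * (dT + dS)) * ‖G y‖ := by ring
      _ ≤ (‖A‖ * (dT + dS)) * (‖G‖ * ‖y‖) := by
          apply mul_le_mul_of_nonneg_left b3; positivity
      _ = k * ‖y‖ := by rw [hk]; ring
  have ht1 : ‖t‖ < 1 := lt_of_le_of_lt htk hk1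
  set u : (Y →L[ℂ] Y)ˣ := Units.oneSub t ht1 with hu
  have huval : (u : Y →L[ℂ] Y) = 1 - t := rfl
  set Gt : Y →L[ℂ] X := G ∘L (↑u⁻¹ : Y →L[ℂ] Y) with hGt
  have h_mul_inv : (↑u : Y →L[ℂ] Y) ∘L (↑u⁻¹ : Y →L[ℂ] Y) = 1 := by
    rw [← mul_def]; exact_mod_cast u.mul_inv
  have h_inv_mul : (↑u⁻¹ : Y →L[ℂ] Y) ∘L (↑u : Y →L[ℂ] Y) = 1 := by
    rw [← mul_def]; exact_mod_cast u.inv_mul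
  -- u is the identity on S
  have huS : ∀ {y}, y ∈ S → (↑u : Y →L[ℂ] Y) y = y := by
    intro y hy
    rw [huval]; simp only [sub_apply, one_apply_eq_self, ht, comp_apply, hGS hy, map_zero, sub_zero]
  have huinvS : ∀ {y}, y ∈ S → (↑u⁻¹ : Y →L[ℂ] Y) y = y := by
    intro y hy
    conv_lhs => rw [← huS hy]
    rw [← comp_apply, h_inv_mul, one_apply_eq_self]
  -- kernel of Gt is S
  have hGtS : ∀ {y}, y ∈ S → Gt y = 0 := fun {y} hy => by
    rw [hGt, comp_apply, huinvS hy]; exact hGS hy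
  have hGtker : ∀ {y}, Gt y = 0 → G y = 0 := by
    intro y hy
    rw [hGt, comp_apply] at hy
    have h1 : (↑u⁻¹ : Y →L[ℂ] Y) y ∈ S := by rw [← hker]; exact hy
    have h2 : (↑u : Y →L[ℂ] Y) ((↑u⁻¹ : Y →L[ℂ] Y) y) = y := by
      rw [← comp_apply, h_mul_inv, one_apply_eq_self]
    have h3 : (↑u : Y →L[ℂ] Y) ((↑u⁻¹ : Y →L[ℂ] Y) y) = (↑u⁻¹ : Y →L[ℂ] Y) y := huS h1
    rw [h2.symm.trans h3]
    exact hy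
  have hGtT : ∀ y, Gt y ∈ T := by
    intro y; rw [hGt, comp_apply]; exact hGT _
  -- outer inverse identity for Gt w.r.t. WAV
  have hAG1 : ∀ y, Gt (A (G y)) = Gt y := by
    intro y
    have hg : G (A (G y)) = G y := by
      have h := congrArg (fun (f : Y →L[ℂ] X) => f y) hGAG
      simpa only [comp_apply] using h
    have h1 : A (G y) - y ∈ S := by
      rw [← hker, LinearMap.mem_ker]
      show G (A (G y) - y) = 0
      rw [map_sub, hg, sub_self]
    have h2 := hGtS h1
    rw [map_sub, sub_eq_zero] at h2
    exact h2
  have houter0 : ∀ z : Y, Gt (((↑w : Y →L[ℂ] Y) ∘L (A ∘L V)) (Gt z)) = Gt z := by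
    intro z
    set x : Y := (↑u⁻¹ : Y →L[ℂ] Y) z with hx
    have hGtz : Gt z = G x := by rw [hGt, comp_apply]
    have hux : (↑u : Y →L[ℂ] Y) x = z := by
      rw [hx, ← comp_apply, h_mul_inv, one_apply_eq_self]
    have htx : t x = x - z := by
      have hz : x - t x = z := by
        have h := hux
        rw [huval] at h
        simpa only [sub_apply, one_apply_eq_self] using h
      rw [← hz]; abel
    have hWAV : ((↑w : Y →L[ℂ] Y) ∘L (A ∘L V)) (Gt z) = A (G x) - (x - z) := by
      have hDx : D (G x) = t x := by rw [ht, comp_apply]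
      have : ((↑w : Y →L[ℂ] Y) ∘L (A ∘L V)) (G x) = A (G x) - D (G x) := by
        rw [hD]
        simp only [sub_apply, comp_apply, sub_sub_cancel]
      rw [hGtz, this, hDx, htx]
    rw [hWAV, map_sub, map_sub, hAG1 x]
    abel
  -- the candidate
  set G' : Y →L[ℂ] X := P' ∘L (Gt ∘L ((1 : Y →L[ℂ] Y) - Q')) with hG'def
  have hG'y : ∀ y, G' y = P' (Gt (y - Q' y)) := by
    intro y; rw [hG'def]; simp only [comp_apply, sub_apply, one_apply_eq_self]
  have hF2 : ∀ y, Gt (y - Q' y) = Gt ((↑w : Y →L[ℂ] Y) y) := by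
    intro y
    have hwy : (↑w : Y →L[ℂ] Y) y = y - Q' y + Q y := by
      rw [hwval]; simp only [sub_apply, one_apply_eq_self]; abel
    rw [hwy, map_add, hGtS (projCLM_mem hS y), add_zero]
  have hF3 : ∀ z, z ∈ T → V z = P' z := by
    intro z hz
    rw [hV]
    simp only [sub_apply, one_apply_eq_self]
    rw [show P z = z from projCLM_eq_self hT hz]
    abel
  -- outer inverse property
  have houter : G' ∘L (A ∘L G') = G' := by
    ext y
    simp only [comp_apply]
    rw [hG'y, hG'y y]
    set z₀ : Y := y - Q' y with hz₀
    have h1 : P' (Gt z₀) = V (Gt z₀) := (hF3 _ (hGtT _)).symm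
    rw [h1]
    have h2 : Gt (A (V (Gt z₀)) - Q' (A (V (Gt z₀)))) = Gt ((↑w : Y →L[ℂ] Y) (A (V (Gt z₀)))) :=
      hF2 _
    rw [h2]
    have h3 : (↑w : Y →L[ℂ] Y) (A (V (Gt z₀))) = ((↑w : Y →L[ℂ] Y) ∘L (A ∘L V)) (Gt z₀) := by
      simp only [comp_apply]
    rw [h3, houter0]
    exact h1
  -- range
  have hrange' : LinearMap.range (G' : Y →ₗ[ℂ] X) = T' := by
    apply le_antisymm
    · rintro x ⟨y, rfl⟩
      show G' y ∈ T'
      rw [hG'y]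
      exact projCLM_mem hT' _
    · intro x hx
      obtain ⟨m, hmT, hPm⟩ := projCLM_surjOn hT hT' hPP'1 x hx
      rw [← hrange] at hmT
      obtain ⟨z, hz⟩ := hmT
      refine ⟨(↑w⁻¹ : Y →L[ℂ] Y) ((↑u : Y →L[ℂ] Y) z), ?_⟩
      show G' _ = x
      rw [hG'y, hF2]
      have hw1 : (↑w : Y →L[ℂ] Y) ((↑w⁻¹ : Y →L[ℂ] Y) ((↑u : Y →L[ℂ] Y) z)) =
          (↑u : Y →L[ℂ] Y) z := by
        rw [← comp_apply, ← mul_def]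
        rw [show ((↑w : Y →L[ℂ] Y) * (↑w⁻¹ : Y →L[ℂ] Y)) = 1 from by exact_mod_cast w.mul_inv]
        rw [one_apply_eq_self]
      rw [hw1, hGt, comp_apply, ← comp_apply (↑u⁻¹ : Y →L[ℂ] Y), h_inv_mul, one_apply_eq_self, show G z = m from hz, hPm]
  -- kernel
  have hker' : LinearMap.ker (G' : Y →ₗ[ℂ] X) = S' := by
    ext y
    rw [LinearMap.mem_ker]
    constructor
    · intro h0
      have h0' : P' (Gt ((↑w : Y →L[ℂ] Y) y)) = 0 := by
        rw [← hF2, ← hG'y]; exact h0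
      have h1 : Gt ((↑w : Y →L[ℂ] Y) y) = 0 :=
        projCLM_inj hT hT' hPP'1 (hGtT _) h0'
      have h2 : G ((↑w : Y →L[ℂ] Y) y) = 0 := hGtker h1
      have h3 : (↑w : Y →L[ℂ] Y) y ∈ S := by rw [← hker]; exact h2
      obtain ⟨m, hmS', hQm⟩ := projCLM_surjOn hS' hS hQ'Q1 _ h3
      have hwm : (↑w : Y →L[ℂ] Y) m = (↑w : Y →L[ℂ] Y) y := by
        rw [hwval]
        simp only [sub_apply, one_apply_eq_self, hQ', projCLM_eq_self hS' hmS']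
        rw [hQm, hwval]
        simp only [sub_apply, one_apply_eq_self, projCLM_eq_self hS' hmS']
        abel
      have hmy : m = y := by
        have := congrArg (fun v => (↑w⁻¹ : Y →L[ℂ] Y) v) hwm
        simpa only [← comp_apply, ← mul_def,
          show ((↑w⁻¹ : Y →L[ℂ] Y) * (↑w : Y →L[ℂ] Y)) = 1 from by exact_mod_cast w.inv_mul,
          one_apply_eq_self] using this
      rw [← hmy]; exact hmS'
    · intro hy
      show G' y = 0
      rw [hG'y, projCLM_eq_self hS' hy, sub_self, map_zero, map_zero]
  -- norm bound
  have huinv_eq : (↑u⁻¹ : Y →L[ℂ] Y) = 1 + (↑u⁻¹ : Y →L[ℂ] Y) * t := by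
    have h : (↑u⁻¹ : Y →L[ℂ] Y) * (1 - t) = 1 := by
      rw [← huval]; exact_mod_cast u.inv_mul
    rw [mul_sub, mul_one] at h
    exact eq_add_of_sub_eq h
  have hGt_eq : ∀ y, Gt y = G y + Gt (t y) := by
    intro y
    have h := congrArg (fun (f : Y →L[ℂ] Y) => f y) huinv_eq
    simp only [add_apply, one_apply_eq_self, mul_apply] at h
    rw [hGt, comp_apply, h, map_add]
    rfl
  have hGtnorm : ‖Gt‖ ≤ ‖G‖ / (1 - k) := by
    have h1 : ‖Gt‖ ≤ ‖G‖ + ‖Gt‖ * ‖t‖ := by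
      apply opNorm_le_bound _ (by positivity)
      intro y
      calc ‖Gt y‖ = ‖G y + Gt (t y)‖ := by rw [← hGt_eq]
        _ ≤ ‖G y‖ + ‖Gt (t y)‖ := norm_add_le _ _
        _ ≤ ‖G‖ * ‖y‖ + ‖Gt‖ * (‖t‖ * ‖y‖) := by
            apply add_le_add (G.le_opNorm y)
            calc ‖Gt (t y)‖ ≤ ‖Gt‖ * ‖t y‖ := le_opNorm _ _
              _ ≤ ‖Gt‖ * (‖t‖ * ‖y‖) :=
                  mul_le_mul_of_nonneg_left (le_opNorm _ _) (norm_nonneg _)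
        _ = (‖G‖ + ‖Gt‖ * ‖t‖) * ‖y‖ := by ring
    rw [le_div_iff₀ hkpos]
    nlinarith [norm_nonneg Gt, htk, norm_nonneg t]
  have hG'norm : ‖G'‖ ≤ ‖Gt‖ := by
    apply opNorm_le_bound _ (norm_nonneg Gt)
    intro y
    rw [hG'y]
    calc ‖P' (Gt (y - Q' y))‖ ≤ ‖Gt (y - Q' y)‖ := projCLM_norm_le hT' _
      _ ≤ ‖Gt‖ * ‖y - Q' y‖ := le_opNorm _ _
      _ ≤ ‖Gt‖ * ‖y‖ := mul_le_mul_of_nonneg_left (projCLM_sub_norm_le hS' y) (norm_nonneg _)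
  exact ⟨G', ⟨houter, hrange', hker'⟩, hG'norm.trans hGtnorm⟩
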